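/- Let V' be a finite-dimensional real vector space with a symmetric bilinear form ⟨·,·⟩ and let V = V' ⊕ ℝv ⊕ ℝv* carry the hyperbolic extension of the form (V' ⊥ (ℝv ⊕ ℝv*), v² = v*² = 0, ⟨v,v*⟩ = 1). For B ∈ V' with B² ≠ 0 define the linear map φ_B : V → V by φ_B(v) = v, φ_B(v*) = B + v* − (B²/2)v, and φ_B(x) = x − ⟨B,x⟩v for x ∈ V'. Then φ_B is an isometry of V, and for every y ∈ V with φ_B(y) ≠ y the sequence of lines [φ_B^k(y)] converges to [v] in the projectivization ℙ(V) as k → ∞. -/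

import Mathlib

open scoped LinearAlgebra.Projectivization

/-- The quotient topology on a projectivization. -/
noncomputable instance projTopology {K V : Type*} [DivisionRing K] [AddCommGroup V]
    [Module K V] [TopologicalSpace V] : TopologicalSpace (ℙ K V) :=
  inferInstanceAs (TopologicalSpace (Quotient (projectivizationSetoid K V)))

/-- The hyperbolic extension form on `V' × ℝ × ℝ`, where `(x, a, c)` represents
`x + a•v + c•v*`:  `V' ⊥ (ℝv ⊕ ℝv*)`, `v² = v*² = 0`, `⟨v,v*⟩ = 1`. -/
noncomputable def hypPairing {V : Type*} [AddCommGroup V] [Module ℝ V]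
    (b : LinearMap.BilinForm ℝ V) (p q : V × ℝ × ℝ) : ℝ :=
  b p.1 q.1 + p.2.1 * q.2.2 + p.2.2 * q.2.1

/-- The map `φ_B`: `φ_B(v) = v`, `φ_B(v*) = B + v* − (B²/2)v`, `φ_B(x) = x − ⟨B,x⟩v` for
`x ∈ V'`, written in the coordinates `(x, a, c) = x + a•v + c•v*`. -/
noncomputable def phiB {V : Type*} [AddCommGroup V] [Module ℝ V]
    (b : LinearMap.BilinForm ℝ V) (B : V) (p : V × ℝ × ℝ) : V × ℝ × ℝ :=
  (p.1 + p.2.2 • B, p.2.1 - b B p.1 - p.2.2 * (b B B / 2), p.2.2)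

open Filter

/-- If `s k / k^m` tends to a nonzero limit, `s k` is eventually nonzero. -/
lemma aux_ne (s : ℕ → ℝ) (m : ℕ) (L : ℝ) (hL : L ≠ 0)
    (h : Tendsto (fun k : ℕ => s k / (k : ℝ) ^ m) atTop (nhds L)) :
    ∀ᶠ k in atTop, s k ≠ 0 := by
  filter_upwards [h.eventually_ne hL] with k hne hs
  exact hne (by rw [hs, zero_div])

/-- If `s k / k^m` tends to a nonzero limit and `j < m`, then `k^j / s k → 0`. -/
lemma aux_inv_pow (s : ℕ → ℝ) (m j : ℕ) (hj : j < m) (L : ℝ) (hL : L ≠ 0)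
    (h : Tendsto (fun k : ℕ => s k / (k : ℝ) ^ m) atTop (nhds L)) :
    Tendsto (fun k : ℕ => (k : ℝ) ^ j * (s k)⁻¹) atTop (nhds 0) := by
  have hinv : Tendsto (fun k : ℕ => (s k / (k : ℝ) ^ m)⁻¹) atTop (nhds L⁻¹) := h.inv₀ hL
  have hsmall : Tendsto (fun k : ℕ => (((k : ℝ) ^ (m - j))⁻¹)) atTop (nhds 0) := by
    apply Tendsto.inv_tendsto_atTop
    exact (tendsto_pow_atTop (by omega : m - j ≠ 0)).comp tendsto_natCast_atTop_atTop
  have hmul := hsmall.mul hinv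
  rw [zero_mul] at hmul
  apply hmul.congr'
  filter_upwards [eventually_ge_atTop 1] with k hk
  have hk0 : (k : ℝ) ≠ 0 := Nat.cast_ne_zero.2 (by omega)
  have hsplit : (k : ℝ) ^ m = (k : ℝ) ^ (m - j) * (k : ℝ) ^ j := by
    rw [← pow_add]; congr 1; omega
  rw [div_eq_mul_inv, mul_inv, inv_inv, hsplit]
  field_simp

/-- `φ_B` is an isometry of `V = V' ⊕ ℝv ⊕ ℝv*`, and for every `y` with `φ_B(y) ≠ y`
the lines `[φ_B^k(y)]` converge to `[v]` in `ℙ(V)` as `k → ∞`. -/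
theorem stmt10 (n : ℕ) (b : LinearMap.BilinForm ℝ (Fin n → ℝ))
    (hsymm : ∀ x y, b x y = b y x) (B : Fin n → ℝ) (hB : b B B ≠ 0) :
    (∀ p q : (Fin n → ℝ) × ℝ × ℝ,
        hypPairing b (phiB b B p) (phiB b B q) = hypPairing b p q) ∧
    (∀ y : (Fin n → ℝ) × ℝ × ℝ, phiB b B y ≠ y →
      ∀ hk : ∀ k : ℕ, (phiB b B)^[k] y ≠ 0,
        Filter.Tendsto (fun k : ℕ => Projectivization.mk ℝ ((phiB b B)^[k] y) (hk k))
          Filter.atTop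
          (nhds (Projectivization.mk ℝ ((0 : Fin n → ℝ), (1 : ℝ), (0 : ℝ))
            (by simp [Prod.ext_iff])))) := by
  constructor
  · intro p q
    simp only [hypPairing, phiB, map_add, map_smul, LinearMap.add_apply, LinearMap.smul_apply,
      smul_eq_mul]
    rw [hsymm p.1 B]
    ring
  · rintro ⟨x, a, c⟩ hy hk
    -- the second coordinate of the k-th iterate
    set s : ℕ → ℝ := fun k => a - k * b B x - c * (b B B) * k ^ 2 / 2 with hs_def
    have hiter : ∀ k : ℕ, (phiB b B)^[k] (x, a, c)
        = (x + ((k : ℝ) * c) • B, s k, c) := by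
      intro k
      induction k with
      | zero => simp [hs_def]
      | succ m ih =>
        rw [Function.iterate_succ_apply', ih]
        simp only [phiB, map_add, map_smul, smul_eq_mul, hs_def]
        refine Prod.ext ?_ (Prod.ext ?_ rfl)
        · show x + ((m : ℝ) * c) • B + c • B = x + (((m + 1 : ℕ) : ℝ) * c) • B
          rw [add_assoc, ← add_smul]
          push_cast
          ring_nf
        · show a - m * b B x - c * b B B * (m : ℝ) ^ 2 / 2 -
              (b B x + ((m : ℝ) * c) * b B B) - c * (b B B / 2)
            = a - ((m + 1 : ℕ) : ℝ) * b B x - c * b B B * ((m + 1 : ℕ) : ℝ) ^ 2 / 2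
          push_cast
          ring
    -- key asymptotics of `s`
    have key : (∀ᶠ k in atTop, s k ≠ 0) ∧
        Tendsto (fun k : ℕ => (s k)⁻¹) atTop (nhds 0) ∧
        Tendsto (fun k : ℕ => (s k)⁻¹ * ((k : ℝ) * c)) atTop (nhds 0) := by
      by_cases hc : c = 0
      · -- linear case
        have hbx : b B x ≠ 0 := by
          intro h0
          apply hy
          simp [phiB, hc, h0, Prod.ext_iff]
        have h1 : Tendsto (fun k : ℕ => s k / (k : ℝ) ^ 1) atTop (nhds (-(b B x))) := by
          have base : Tendsto (fun k : ℕ => 1 / (k : ℝ)) atTop (nhds 0) :=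
            tendsto_one_div_atTop_nhds_zero_nat
          have h2 : Tendsto (fun k : ℕ => a * (1 / (k : ℝ)) - b B x) atTop
              (nhds (a * 0 - b B x)) := (base.const_mul a).sub_const _
          rw [show a * 0 - b B x = -(b B x) by ring] at h2
          apply h2.congr'
          filter_upwards [eventually_ge_atTop 1] with k hk1
          have hk0 : (k : ℝ) ≠ 0 := Nat.cast_ne_zero.2 (by omega)
          simp only [hs_def, hc]
          field_simp
          ring
        refine ⟨aux_ne s 1 _ (neg_ne_zero.2 hbx) h1, ?_, ?_⟩
        · have := aux_inv_pow s 1 0 (by omega) _ (neg_ne_zero.2 hbx) h1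
          simpa using this
        · simp only [hc, mul_zero]
          exact tendsto_const_nhds
      · -- quadratic case
        have hL : -(c * b B B / 2) ≠ 0 := by
          simp only [neg_ne_zero, div_ne_zero_iff, mul_ne_zero_iff]
          exact ⟨⟨hc, hB⟩, two_ne_zero⟩
        have h1 : Tendsto (fun k : ℕ => s k / (k : ℝ) ^ 2) atTop (nhds (-(c * b B B / 2))) := by
          have base : Tendsto (fun k : ℕ => 1 / (k : ℝ)) atTop (nhds 0) :=
            tendsto_one_div_atTop_nhds_zero_nat
          have h2 : Tendsto (fun k : ℕ =>
              a * (1 / (k : ℝ) * (1 / (k : ℝ))) - b B x * (1 / (k : ℝ)) - c * b B B / 2) atTop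
              (nhds (a * (0 * 0) - b B x * 0 - c * b B B / 2)) :=
            (((base.mul base).const_mul a).sub (base.const_mul _)).sub_const _
          rw [show a * (0 * 0) - b B x * 0 - c * b B B / 2 = -(c * b B B / 2) by ring] at h2
          apply h2.congr'
          filter_upwards [eventually_ge_atTop 1] with k hk1
          have hk0 : (k : ℝ) ≠ 0 := Nat.cast_ne_zero.2 (by omega)
          simp only [hs_def]
          field_simp
        refine ⟨aux_ne s 2 _ hL h1, ?_, ?_⟩
        · have := aux_inv_pow s 2 0 (by omega) _ hL h1
          simpa using this
        · have := aux_inv_pow s 2 1 (by omega) _ hL h1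
          have h3 := this.mul_const c
          rw [zero_mul] at h3
          apply h3.congr
          intro k
          simp only [pow_one]
          ring
    obtain ⟨hs0, hinv, hckinv⟩ := key
    -- the rescaled sequence converges to (0, 1, 0)
    set v0 : (Fin n → ℝ) × ℝ × ℝ := (0, 1, 0) with hv0_def
    have hv0 : v0 ≠ 0 := by simp [hv0_def, Prod.ext_iff]
    set w : ℕ → (Fin n → ℝ) × ℝ × ℝ := fun k => (s k)⁻¹ • (phiB b B)^[k] (x, a, c) with hw_def
    have hw_eq : ∀ k, w k = ((s k)⁻¹ • x + ((s k)⁻¹ * ((k : ℝ) * c)) • B,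
        (s k)⁻¹ * s k, (s k)⁻¹ * c) := by
      intro k
      simp only [hw_def, hiter k, Prod.smul_def, smul_eq_mul, smul_add, smul_smul]
    have hw_tendsto : Tendsto w atTop (nhds v0) := by
      have h1 : Tendsto (fun k => (s k)⁻¹ • x + ((s k)⁻¹ * ((k : ℝ) * c)) • B) atTop
          (nhds (0 : Fin n → ℝ)) := by
        have hA : Tendsto (fun k => (s k)⁻¹ • x) atTop (nhds ((0 : ℝ) • x)) :=
          hinv.smul tendsto_const_nhds
        have hBt : Tendsto (fun k => ((s k)⁻¹ * ((k : ℝ) * c)) • B) atTop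
            (nhds ((0 : ℝ) • B)) := hckinv.smul tendsto_const_nhds
        rw [zero_smul] at hA hBt
        simpa using hA.add hBt
      have h2 : Tendsto (fun k => (s k)⁻¹ * s k) atTop (nhds 1) := by
        apply tendsto_const_nhds.congr'
        filter_upwards [hs0] with k hkne
        exact (inv_mul_cancel₀ hkne).symm
      have h3 : Tendsto (fun k => (s k)⁻¹ * c) atTop (nhds 0) := by
        have := hinv.mul_const c
        rwa [zero_mul] at this
      have := h1.prodMk_nhds (h2.prodMk_nhds h3)
      apply this.congr
      intro k
      rw [hw_eq k]
    -- pass to the projectivization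
    have hwne : ∀ k, s k ≠ 0 → w k ≠ 0 := fun k hkne =>
      smul_ne_zero (inv_ne_zero hkne) (hk k)
    set u : ℕ → {p : (Fin n → ℝ) × ℝ × ℝ // p ≠ 0} := fun k =>
      if h : s k ≠ 0 then ⟨w k, hwne k h⟩ else ⟨v0, hv0⟩ with hu_def
    have hu_val : Tendsto (fun k => (u k : (Fin n → ℝ) × ℝ × ℝ)) atTop (nhds v0) := by
      apply hw_tendsto.congr'
      filter_upwards [hs0] with k hkne
      simp [hu_def, hkne]
    have hu_t : Tendsto u atTop (nhds ⟨v0, hv0⟩) := by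
      rw [Topology.IsEmbedding.subtypeVal.tendsto_nhds_iff]
      exact hu_val
    have hq : Tendsto (fun k => (Quotient.mk'' (u k) : ℙ ℝ ((Fin n → ℝ) × ℝ × ℝ))) atTop
        (nhds (Quotient.mk'' ⟨v0, hv0⟩)) :=
      (continuous_quotient_mk'.tendsto _).comp hu_t
    refine Tendsto.congr' ?_ hq
    filter_upwards [hs0] with k hkne
    have hueq : u k = ⟨w k, hwne k hkne⟩ := by simp [hu_def, hkne]
    rw [hueq]
    show Projectivization.mk ℝ (w k) (hwne k hkne)
      = Projectivization.mk ℝ ((phiB b B)^[k] (x, a, c)) (hk k)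
    rw [Projectivization.mk_eq_mk_iff' ℝ _ _ (hwne k hkne) (hk k)]
    exact ⟨(s k)⁻¹, rfl⟩
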